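/- arXiv:2401.14666 — 2 statements merged into one kernel-verified Lean document; each statement's English description precedes it below -/
import Mathlib

section
/- Complex S-lemma: Let A₁, A₂ be n×n Hermitian complex matrices, b₁, b₂ ∈ ℂⁿ, and c₁, c₂ ∈ ℝ, and for m = 1, 2 define the quadratic functions f_m(x) = xᴴ A_m x + 2 Re(b_mᴴ x) + c_m (which are real-valued since A_m is Hermitian). Assume the Slater condition: there exists x̂ ∈ ℂⁿ with f₁(x̂) > 0. Then the implication ‘for all x ∈ ℂⁿ, f₁(x) ≥ 0 implies f₂(x) ≥ 0’ holds if and only if there exists λ ≥ 0 such that the (n+1)×(n+1) block matrix [[A₂, b₂], [b₂ᴴ, c₂]] − λ·[[A₁, b₁], [b₁ᴴ, c₁]] is positive semidefinite. -/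
open Matrix ComplexOrder


namespace SLemAux

set_option linter.unusedSectionVars false
set_option maxHeartbeats 1000000
set_option linter.unnecessarySimpa false
set_option linter.unusedTactic false

variable {ι : Type*} [Fintype ι] [DecidableEq ι]

noncomputable def qf (M : Matrix ι ι ℂ) (z : ι → ℂ) : ℝ := (star z ⬝ᵥ M *ᵥ z).re

lemma star_form (M : Matrix ι ι ℂ) (hM : M.IsHermitian) (z w : ι → ℂ) :
    star w ⬝ᵥ M *ᵥ z = star (star z ⬝ᵥ M *ᵥ w) := by
  rw [star_dotProduct]
  congr 1
  rw [star_mulVec, ← dotProduct_mulVec, hM.eq]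

lemma form_smul (M : Matrix ι ι ℂ) (a b : ℂ) (z w : ι → ℂ) :
    star (a • z) ⬝ᵥ M *ᵥ (b • w) = star a * b * (star z ⬝ᵥ M *ᵥ w) := by
  rw [star_smul, mulVec_smul, smul_dotProduct, dotProduct_smul]
  simp [smul_smul, mul_assoc]

lemma qf_smul (M : Matrix ι ι ℂ) (a : ℂ) (z : ι → ℂ) :
    qf M (a • z) = Complex.normSq a * qf M z := by
  unfold qf
  rw [form_smul]
  have h : star a * a = (Complex.normSq a : ℂ) := by
    rw [Complex.star_def, mul_comm, Complex.mul_conj]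
  rw [h, Complex.re_ofReal_mul]

lemma qf_add (M : Matrix ι ι ℂ) (hM : M.IsHermitian) (z w : ι → ℂ) :
    qf M (z + w) = qf M z + qf M w + 2 * (star z ⬝ᵥ M *ᵥ w).re := by
  unfold qf
  rw [star_add, add_dotProduct, mulVec_add, dotProduct_add, dotProduct_add,
    star_form M hM z w]
  simp only [Complex.add_re]
  have : (star (star z ⬝ᵥ M *ᵥ w)).re = (star z ⬝ᵥ M *ᵥ w).re := by
    simp [Complex.star_def]
  rw [this]; ring

lemma qf_zero (M : Matrix ι ι ℂ) : qf M 0 = 0 := by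
  unfold qf; simp

lemma qf_im (M : Matrix ι ι ℂ) (hM : M.IsHermitian) (z : ι → ℂ) :
    (star z ⬝ᵥ M *ᵥ z).im = 0 := by
  have := star_form M hM z z
  have h2 : (star z ⬝ᵥ M *ᵥ z).im = -(star z ⬝ᵥ M *ᵥ z).im := by
    conv_lhs => rw [this]
    simp [Complex.star_def]
  linarith

lemma qf_addM (M N : Matrix ι ι ℂ) (z : ι → ℂ) : qf (M + N) z = qf M z + qf N z := by
  unfold qf; rw [add_mulVec, dotProduct_add, Complex.add_re]

lemma qf_smulM (M : Matrix ι ι ℂ) (r : ℝ) (z : ι → ℂ) :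
    qf ((r : ℂ) • M) z = r * qf M z := by
  unfold qf
  rw [smul_mulVec, dotProduct_smul]
  simp [Complex.re_ofReal_mul]

lemma qf_subM (M N : Matrix ι ι ℂ) (z : ι → ℂ) : qf (M - N) z = qf M z - qf N z := by
  unfold qf; rw [sub_mulVec, dotProduct_sub, Complex.sub_re]

lemma qf_one_eq (z : ι → ℂ) : qf 1 z = ∑ i, Complex.normSq (z i) := by
  unfold qf
  rw [one_mulVec, dotProduct]
  rw [Complex.re_sum]
  congr 1; funext i
  simp only [Pi.star_apply, Complex.star_def]
  rw [mul_comm, Complex.mul_conj]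
  simp

lemma qf_one_nonneg (z : ι → ℂ) : 0 ≤ qf 1 z := by
  rw [qf_one_eq]
  exact Finset.sum_nonneg fun i _ => Complex.normSq_nonneg _

lemma qf_one_pos (z : ι → ℂ) (hz : z ≠ 0) : 0 < qf 1 z := by
  rcases (qf_one_nonneg z).lt_or_eq with h | h
  · exact h
  · exfalso; apply hz
    rw [qf_one_eq] at h
    funext i
    have := (Finset.sum_eq_zero_iff_of_nonneg (fun i _ => Complex.normSq_nonneg (z i))).1 h.symm i (Finset.mem_univ i)
    exact Complex.normSq_eq_zero.1 this

lemma qf_continuous (M : Matrix ι ι ℂ) : Continuous (qf M) := by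
  unfold qf
  apply Complex.continuous_re.comp
  unfold dotProduct mulVec
  apply continuous_finset_sum
  intro i _
  apply Continuous.mul
  · exact (continuous_star.comp (continuous_apply i))
  · apply continuous_finset_sum
    intro j _
    exact continuous_const.mul (continuous_apply j)


lemma herm_real_smul (M : Matrix ι ι ℂ) (r : ℝ) (h : M.IsHermitian) :
    ((r : ℂ) • M).IsHermitian := by
  unfold Matrix.IsHermitian
  rw [conjTranspose_smul, h.eq]
  congr 1
  simp [Complex.star_def, Complex.conj_ofReal]

lemma herm_comb (M₁ M₂ : Matrix ι ι ℂ) (h₁ : M₁.IsHermitian) (h₂ : M₂.IsHermitian)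
    (a b c : ℝ) :
    ((a : ℂ) • M₁ + (b : ℂ) • M₂ + (c : ℂ) • (1 : Matrix ι ι ℂ)).IsHermitian :=
  ((herm_real_smul M₁ a h₁).add (herm_real_smul M₂ b h₂)).add
    (herm_real_smul 1 c isHermitian_one)

lemma herm_sub (M N : Matrix ι ι ℂ) (h₁ : M.IsHermitian) (h₂ : N.IsHermitian) :
    (M - N).IsHermitian := by
  unfold Matrix.IsHermitian
  rw [conjTranspose_sub, h₁.eq, h₂.eq]

lemma unit_phase (c : ℂ) : ∃ μ : ℂ, Complex.normSq μ = 1 ∧ (star μ * c).re = 0 := by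
  by_cases hc : c = 0
  · exact ⟨1, by simp, by simp [hc]⟩
  · refine ⟨Complex.I * (c / (‖c‖ : ℝ)), ?_, ?_⟩
    · have : (‖c‖ : ℝ) ≠ 0 := by
        simpa using (norm_ne_zero_iff.mpr hc)
      simp [Complex.normSq_mul, Complex.normSq_div, Complex.normSq_ofReal, Complex.sq_norm]
      rw [← sq]
      rw [Complex.sq_norm, div_self (by simpa using Complex.normSq_pos.2 hc |>.ne')]
    · have h1 : star (Complex.I * (c / (‖c‖ : ℝ))) * c
          = -Complex.I * ((Complex.normSq c / ‖c‖ : ℝ)) := by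
        simp only [Complex.star_def, _root_.map_mul, map_div₀, Complex.conj_ofReal,
          Complex.conj_I]
        field_simp
        rw [mul_comm ((starRingEnd ℂ) c) c, Complex.mul_conj, ← Complex.ofReal_mul,
          mul_div_cancel₀ _ (norm_ne_zero_iff.mpr hc)]
      rw [h1]
      simp

lemma form_smul_right (M : Matrix ι ι ℂ) (a : ℂ) (z w : ι → ℂ) :
    star z ⬝ᵥ M *ᵥ (a • w) = a * (star z ⬝ᵥ M *ᵥ w) := by
  have := form_smul M 1 a z w
  simpa using this

lemma unit_phase_nonneg (c : ℂ) : ∃ μ : ℂ, Complex.normSq μ = 1 ∧ 0 ≤ (μ * c).re := by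
  by_cases hc : c = 0
  · exact ⟨1, by simp, by simp [hc]⟩
  · refine ⟨star c / (‖c‖ : ℝ), ?_, ?_⟩
    · have habs : (‖c‖ : ℝ) ≠ 0 := by simpa using (norm_ne_zero_iff.mpr hc)
      simp only [Complex.normSq_div, Complex.normSq_ofReal, Complex.star_def,
        Complex.normSq_conj]
      rw [← sq, Complex.sq_norm, div_self (by simpa using (Complex.normSq_pos.2 hc).ne')]
    · have h1 : star c / (‖c‖ : ℝ) * c = ((Complex.normSq c / ‖c‖ : ℝ) : ℂ) := by
        rw [Complex.star_def, div_mul_eq_mul_div, mul_comm ((starRingEnd ℂ) c) c,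
          Complex.mul_conj]
        push_cast
        ring
      rw [h1, Complex.ofReal_re]
      exact div_nonneg (Complex.normSq_nonneg c) (norm_nonneg c)


lemma qf_ofReal_smul (M : Matrix ι ι ℂ) (r : ℝ) (z : ι → ℂ) :
    qf M (((r : ℝ) : ℂ) • z) = r ^ 2 * qf M z := by
  rw [qf_smul, Complex.normSq_ofReal, sq]

lemma form_smul_left (M : Matrix ι ι ℂ) (a : ℂ) (z w : ι → ℂ) :
    star (a • z) ⬝ᵥ M *ᵥ w = star a * (star z ⬝ᵥ M *ᵥ w) := by
  have := form_smul M a 1 z w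
  simpa using this

lemma qf_combo (M : Matrix ι ι ℂ) (hM : M.IsHermitian) (a b : ℝ) (z w : ι → ℂ) :
    qf M (((a : ℝ) : ℂ) • z + ((b : ℝ) : ℂ) • w)
      = a ^ 2 * qf M z + b ^ 2 * qf M w + 2 * a * b * (star z ⬝ᵥ M *ᵥ w).re := by
  rw [qf_add M hM, qf_ofReal_smul, qf_ofReal_smul, form_smul]
  have hs : star ((a : ℂ)) = (a : ℂ) := by simp [Complex.star_def, Complex.conj_ofReal]
  rw [hs]
  have : ((a : ℂ) * (b : ℂ) * (star z ⬝ᵥ M *ᵥ w)).re = a * b * (star z ⬝ᵥ M *ᵥ w).re := by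
    rw [← Complex.ofReal_mul, Complex.re_ofReal_mul]
  rw [this]; ring

/-- Joint numerical range of two Hermitian matrices on the unit sphere is convex. -/
lemma convex_jointRange (M₁ M₂ : Matrix ι ι ℂ) (h₁ : M₁.IsHermitian) (h₂ : M₂.IsHermitian) :
    Convex ℝ {x : ℝ × ℝ | ∃ z : ι → ℂ, qf 1 z = 1 ∧ x = (qf M₁ z, qf M₂ z)} := by
  rintro x ⟨z, hz1, hxz⟩ y ⟨w, hw1, hyw⟩ a b ha hb hab
  by_cases hxy : x = y
  · subst hxy
    rw [← add_smul, hab, one_smul]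
    exact ⟨z, hz1, hxz⟩
  -- setup
  set d1 : ℝ := y.1 - x.1 with hd1
  set d2 : ℝ := y.2 - x.2 with hd2
  set D : ℝ := d1 ^ 2 + d2 ^ 2 with hD
  have hDpos : 0 < D := by
    rcases eq_or_ne d1 0 with h1 | h1
    · rcases eq_or_ne d2 0 with h2 | h2
      · exfalso; apply hxy
        have : y.1 = x.1 := by rw [hd1] at h1; linarith
        have h22 : y.2 = x.2 := by rw [hd2] at h2; linarith
        exact Prod.ext this.symm h22.symm
      · have : d2 ^ 2 ≠ 0 := pow_ne_zero _ h2
        have h2' : 0 < d2 ^ 2 := lt_of_le_of_ne (sq_nonneg _) (Ne.symm this)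
        nlinarith [sq_nonneg d1]
    · have : d1 ^ 2 ≠ 0 := pow_ne_zero _ h1
      have h1' : 0 < d1 ^ 2 := lt_of_le_of_ne (sq_nonneg _) (Ne.symm this)
      nlinarith [sq_nonneg d2]
  set γK : ℝ := d2 * x.1 - d1 * x.2 with hγK
  set γH : ℝ := -(d1 * x.1 + d2 * x.2) with hγH
  set K : Matrix ι ι ℂ := ((-d2 : ℝ) : ℂ) • M₁ + ((d1 : ℝ) : ℂ) • M₂ + ((γK : ℝ) : ℂ) • 1
    with hK
  set H : Matrix ι ι ℂ := ((d1 : ℝ) : ℂ) • M₁ + ((d2 : ℝ) : ℂ) • M₂ + ((γH : ℝ) : ℂ) • 1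
    with hH
  have hKherm : K.IsHermitian := herm_comb M₁ M₂ h₁ h₂ _ _ _
  have hHherm : H.IsHermitian := herm_comb M₁ M₂ h₁ h₂ _ _ _
  have qfK : ∀ u, qf K u = -d2 * qf M₁ u + d1 * qf M₂ u + γK * qf 1 u := by
    intro u; rw [hK, qf_addM, qf_addM, qf_smulM, qf_smulM, qf_smulM]
  have qfH : ∀ u, qf H u = d1 * qf M₁ u + d2 * qf M₂ u + γH * qf 1 u := by
    intro u; rw [hH, qf_addM, qf_addM, qf_smulM, qf_smulM, qf_smulM]
  have hx1 : qf M₁ z = x.1 := by rw [hxz]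
  have hx2 : qf M₂ z = x.2 := by rw [hxz]
  have hy1 : qf M₁ w = y.1 := by rw [hyw]
  have hy2 : qf M₂ w = y.2 := by rw [hyw]
  have hKz : qf K z = 0 := by rw [qfK, hx1, hx2, hz1, hγK]; ring
  have hKw : qf K w = 0 := by rw [qfK, hy1, hy2, hw1, hγK, hd1, hd2]; ring
  have hHz : qf H z = 0 := by rw [qfH, hx1, hx2, hz1, hγH]; ring
  have hHw : qf H w = D := by rw [qfH, hy1, hy2, hw1, hγH, hD, hd1, hd2]; ring
  -- phase
  obtain ⟨μ, hμ1, hμ2⟩ := unit_phase (star z ⬝ᵥ K *ᵥ w)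
  set z' : ι → ℂ := μ • z with hz'
  have hqf_z' : ∀ M : Matrix ι ι ℂ, qf M z' = qf M z := by
    intro M; rw [hz', qf_smul, hμ1, one_mul]
  have hcross : (star z' ⬝ᵥ K *ᵥ w).re = 0 := by
    rw [hz', form_smul_left]
    exact hμ2
  -- the path
  set v : ℝ → (ι → ℂ) := fun t => (((1 - t : ℝ) : ℂ)) • z' + ((t : ℝ) : ℂ) • w with hv
  have hvcont : Continuous v := by
    apply Continuous.add
    · exact (Complex.continuous_ofReal.comp (continuous_const.sub continuous_id)).smul
        continuous_const
    · exact (Complex.continuous_ofReal.comp continuous_id).smul continuous_const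
  set N : ℝ → ℝ := fun t => qf 1 (v t) with hN
  have hNval : ∀ t, N t = (1 - t) ^ 2 + t ^ 2 + 2 * (1 - t) * t * (star z' ⬝ᵥ (1 : Matrix ι ι ℂ) *ᵥ w).re := by
    intro t
    rw [hN]
    simp only [hv]
    rw [qf_combo 1 isHermitian_one, hqf_z' 1, hz1, hw1]
    ring
  have hvne : ∀ t ∈ Set.Icc (0 : ℝ) 1, v t ≠ 0 := by
    intro t ht hv0
    have h12 : (1 - t) ^ 2 = t ^ 2 := by
      have e1 : (((1 - t : ℝ) : ℂ)) • z' = -(((t : ℝ) : ℂ) • w) :=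
        eq_neg_of_add_eq_zero_left (hv0 : (((1 - t : ℝ) : ℂ)) • z' + ((t : ℝ) : ℂ) • w = 0)
      have e2 : qf 1 ((((1 - t : ℝ) : ℂ)) • z') = qf 1 (-(((t : ℝ) : ℂ) • w)) := by rw [e1]
      rw [qf_ofReal_smul] at e2
      rw [hqf_z' 1, hz1] at e2
      have : -(((t : ℝ) : ℂ) • w) = (((-t : ℝ) : ℂ)) • w := by
        push_cast; rw [neg_smul]
      rw [this, qf_ofReal_smul, hw1] at e2
      simpa using e2
    have ht2 : t = 1 / 2 := by
      have h' : 1 - 2 * t = 0 := by nlinarith [h12]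
      linarith
    subst ht2
    have hzw : z' = -w := by
      have h5 : (((1 - (1:ℝ)/2 : ℝ)) : ℂ) • z' + ((((1:ℝ)/2 : ℝ)) : ℂ) • w = 0 := hv0
      have hc : (((1 - (1:ℝ)/2 : ℝ)) : ℂ) = ((((1:ℝ)/2 : ℝ)) : ℂ) := by norm_num
      rw [hc, ← smul_add] at h5
      have h6 : z' + w = 0 := by
        have hc2 : ((((1:ℝ)/2 : ℝ)) : ℂ) ≠ 0 := by norm_num
        exact (smul_eq_zero.mp h5).resolve_left hc2
      exact eq_neg_of_add_eq_zero_left h6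
    apply hxy
    have : ∀ M : Matrix ι ι ℂ, qf M z = qf M w := by
      intro M
      have := hqf_z' M
      rw [hzw] at this
      have h2 : qf M (-w) = qf M w := by
        have : (-w : ι → ℂ) = ((-1 : ℂ)) • w := by funext i; simp
        rw [this, qf_smul]; simp
      rw [h2] at this
      exact this.symm
    rw [hxz, hyw, this M₁, this M₂]
  have hNpos : ∀ t ∈ Set.Icc (0 : ℝ) 1, 0 < N t := fun t ht =>
    qf_one_pos (v t) (hvne t ht)
  -- qf K vanishes along path
  have hKv : ∀ t, qf K (v t) = 0 := by
    intro t
    simp only [hv]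
    rw [qf_combo K hKherm, hqf_z' K, hKz, hKw, hcross]
    ring
  have hHv : ∀ t, qf H (v t) = (1 - t) ^ 2 * 0 + t ^ 2 * D
      + 2 * (1 - t) * t * (star z' ⬝ᵥ H *ᵥ w).re := by
    intro t
    simp only [hv]
    rw [qf_combo H hHherm, hqf_z' H, hHz, hHw]
  -- continuous function F
  set F : ℝ → ℝ := fun t => qf H (v t) / N t with hF
  have hFcont : ContinuousOn F (Set.Icc 0 1) := by
    apply ContinuousOn.div
    · exact ((qf_continuous H).comp hvcont).continuousOn
    · exact ((qf_continuous 1).comp hvcont).continuousOn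
    · intro t ht; exact (hNpos t ht).ne'
  have hv0 : v 0 = z' := by simp [hv]
  have hv1 : v 1 = w := by simp [hv]
  have hF0 : F 0 = 0 := by
    simp only [hF, hv0]
    rw [hqf_z' H, hHz]
    simp
  have hN1 : N 1 = 1 := by
    simp only [hN, hv1]
    exact hw1
  have hF1 : F 1 = D := by
    simp only [hF, hv1, hN1]
    rw [hHw]
    exact div_one D
  have hbD : b * D ∈ Set.Icc (F 0) (F 1) := by
    rw [hF0, hF1]
    constructor
    · exact mul_nonneg hb hDpos.le
    · have hb1 : b ≤ 1 := by linarith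
      exact mul_le_of_le_one_left hDpos.le hb1
  obtain ⟨t₀, ht₀, hFt₀⟩ := intermediate_value_Icc zero_le_one hFcont hbD
  have hNN : 0 < N t₀ := hNpos t₀ ht₀
  set u : ι → ℂ := (((Real.sqrt (N t₀))⁻¹ : ℝ) : ℂ) • v t₀ with hu
  have hqfu : ∀ M : Matrix ι ι ℂ, qf M u = qf M (v t₀) / N t₀ := by
    intro M
    rw [hu, qf_ofReal_smul]
    have hsq : ((Real.sqrt (N t₀))⁻¹) ^ 2 = (N t₀)⁻¹ := by
      rw [← Real.sqrt_inv, Real.sq_sqrt (inv_nonneg.2 hNN.le)]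
    rw [hsq, inv_mul_eq_div]
  have hu1 : qf 1 u = 1 := by
    rw [hqfu 1]
    have : qf 1 (v t₀) = N t₀ := rfl
    rw [this]
    exact div_self hNN.ne'
  have hKu : qf K u = 0 := by rw [hqfu K, hKv]; simp
  have hHu : qf H u = b * D := by rw [hqfu H]; exact hFt₀
  set X : ℝ := qf M₁ u with hXdef
  set Y : ℝ := qf M₂ u with hYdef
  have e1 : -d2 * X + d1 * Y + γK = 0 := by
    have h := qfK u
    rw [hKu, hu1] at h
    rw [← hXdef, ← hYdef] at h
    linear_combination (-1 : ℝ) * h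
  have e2 : d1 * X + d2 * Y + γH = b * D := by
    have h := qfH u
    rw [hHu, hu1] at h
    rw [← hXdef, ← hYdef] at h
    linear_combination (-1 : ℝ) * h
  have hXval : X = x.1 + b * d1 := by
    have h3 : D * X = D * (x.1 + b * d1) := by
      linear_combination (-d2) * e1 + d1 * e2 + d2 * hγK + (-d1) * hγH + X * hD
    exact mul_left_cancel₀ hDpos.ne' h3
  have hYval : Y = x.2 + b * d2 := by
    have h3 : D * Y = D * (x.2 + b * d2) := by
      linear_combination d1 * e1 + d2 * e2 + (-d1) * hγK + (-d2) * hγH + Y * hD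
    exact mul_left_cancel₀ hDpos.ne' h3
  have hfin : a • x + b • y = (X, Y) := by
    have g1 : (a • x + b • y).1 = X := by
      simp only [Prod.fst_add, Prod.smul_fst, smul_eq_mul]
      rw [hXval, hd1]
      linear_combination x.1 * hab
    have g2 : (a • x + b • y).2 = Y := by
      simp only [Prod.snd_add, Prod.smul_snd, smul_eq_mul]
      rw [hYval, hd2]
      linear_combination x.2 * hab
    exact Prod.ext g1 g2
  rw [hfin]
  exact ⟨u, hu1, by rw [hXdef, hYdef]⟩

lemma mem_scale (M₁ M₂ : Matrix ι ι ℂ) (r : ℝ) (hr : 0 ≤ r) (u : ι → ℂ) :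
    ∃ u' : ι → ℂ, qf M₁ u' = r * qf M₁ u ∧ qf M₂ u' = r * qf M₂ u :=
  ⟨((Real.sqrt r : ℝ) : ℂ) • u,
    by rw [qf_ofReal_smul, Real.sq_sqrt hr],
    by rw [qf_ofReal_smul, Real.sq_sqrt hr]⟩

lemma convex_W (M₁ M₂ : Matrix ι ι ℂ) (h₁ : M₁.IsHermitian) (h₂ : M₂.IsHermitian) :
    Convex ℝ {x : ℝ × ℝ | ∃ z : ι → ℂ, x = (qf M₁ z, qf M₂ z)} := by
  rintro x ⟨z, hxz⟩ y ⟨w, hyw⟩ a b ha hb hab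
  rcases eq_or_lt_of_le ha with ha0 | ha0
  · have hb1 : b = 1 := by linarith
    rw [← ha0, hb1, zero_smul, one_smul, zero_add]
    exact ⟨w, hyw⟩
  rcases eq_or_lt_of_le hb with hb0 | hb0
  · have ha1 : a = 1 := by linarith
    rw [← hb0, ha1, zero_smul, one_smul, add_zero]
    exact ⟨z, hxz⟩
  by_cases hz0 : qf 1 z = 0
  · have hz : z = 0 := by
      by_contra h
      exact (qf_one_pos z h).ne' hz0
    obtain ⟨u', hu1, hu2⟩ := mem_scale M₁ M₂ b hb w
    refine ⟨u', ?_⟩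
    have hx : x = (0, 0) := by rw [hxz, hz, qf_zero, qf_zero]
    apply Prod.ext
    · simp only [hx, hyw, Prod.fst_add, Prod.smul_fst, smul_eq_mul, hu1]
      ring
    · simp only [hx, hyw, Prod.snd_add, Prod.smul_snd, smul_eq_mul, hu2]
      ring
  by_cases hw0 : qf 1 w = 0
  · have hw : w = 0 := by
      by_contra h
      exact (qf_one_pos w h).ne' hw0
    obtain ⟨u', hu1, hu2⟩ := mem_scale M₁ M₂ a ha z
    refine ⟨u', ?_⟩
    have hy : y = (0, 0) := by rw [hyw, hw, qf_zero, qf_zero]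
    apply Prod.ext
    · simp only [hy, hxz, Prod.fst_add, Prod.smul_fst, smul_eq_mul, hu1]
      ring
    · simp only [hy, hxz, Prod.snd_add, Prod.smul_snd, smul_eq_mul, hu2]
      ring
  -- main case
  have hnz : 0 < qf 1 z := (qf_one_nonneg z).lt_of_ne (Ne.symm hz0)
  have hnw : 0 < qf 1 w := (qf_one_nonneg w).lt_of_ne (Ne.symm hw0)
  set nz := qf 1 z with hnzdef
  set nw := qf 1 w with hnwdef
  set zh : ι → ℂ := (((Real.sqrt nz)⁻¹ : ℝ) : ℂ) • z with hzh
  set wh : ι → ℂ := (((Real.sqrt nw)⁻¹ : ℝ) : ℂ) • w with hwh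
  have hsqz : ((Real.sqrt nz)⁻¹) ^ 2 = nz⁻¹ := by
    rw [← Real.sqrt_inv, Real.sq_sqrt (inv_nonneg.2 hnz.le)]
  have hsqw : ((Real.sqrt nw)⁻¹) ^ 2 = nw⁻¹ := by
    rw [← Real.sqrt_inv, Real.sq_sqrt (inv_nonneg.2 hnw.le)]
  have hzh1 : qf 1 zh = 1 := by
    rw [hzh, qf_ofReal_smul, hsqz, ← hnzdef]
    exact inv_mul_cancel₀ hnz.ne'
  have hwh1 : qf 1 wh = 1 := by
    rw [hwh, qf_ofReal_smul, hsqw, ← hnwdef]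
    exact inv_mul_cancel₀ hnw.ne'
  have hzhM : ∀ M : Matrix ι ι ℂ, qf M zh = nz⁻¹ * qf M z := by
    intro M; rw [hzh, qf_ofReal_smul, hsqz]
  have hwhM : ∀ M : Matrix ι ι ℂ, qf M wh = nw⁻¹ * qf M w := by
    intro M; rw [hwh, qf_ofReal_smul, hsqw]
  set R : ℝ := a * nz + b * nw with hR
  have hRpos : 0 < R := by positivity
  set a' : ℝ := a * nz / R with ha'
  set b' : ℝ := b * nw / R with hb'
  have hmem := convex_jointRange M₁ M₂ h₁ h₂
    (x := (qf M₁ zh, qf M₂ zh)) ⟨zh, hzh1, rfl⟩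
    (y := (qf M₁ wh, qf M₂ wh)) ⟨wh, hwh1, rfl⟩
    (by positivity : (0:ℝ) ≤ a') (by positivity : (0:ℝ) ≤ b')
    (by rw [ha', hb']; field_simp; exact hR.symm)
  obtain ⟨u, hu1, huv⟩ := hmem
  obtain ⟨u', hu'1, hu'2⟩ := mem_scale M₁ M₂ R hRpos.le u
  refine ⟨u', ?_⟩
  have huv1 : a' * qf M₁ zh + b' * qf M₁ wh = qf M₁ u := congrArg Prod.fst huv
  have huv2 : a' * qf M₂ zh + b' * qf M₂ wh = qf M₂ u := congrArg Prod.snd huv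
  apply Prod.ext
  · simp only [hxz, hyw, Prod.fst_add, Prod.smul_fst, smul_eq_mul, hu'1]
    rw [← huv1, hzhM M₁, hwhM M₁, ha', hb']
    field_simp
  · simp only [hxz, hyw, Prod.snd_add, Prod.smul_snd, smul_eq_mul, hu'2]
    rw [← huv2, hzhM M₂, hwhM M₂, ha', hb']
    field_simp

lemma homog_S (M₁ M₂ : Matrix ι ι ℂ) (h₁ : M₁.IsHermitian) (h₂ : M₂.IsHermitian)
    (hpos : ∃ zh : ι → ℂ, 0 < qf M₁ zh)
    (himp : ∀ z : ι → ℂ, 0 ≤ qf M₁ z → 0 ≤ qf M₂ z) :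
    ∃ lam : ℝ, 0 ≤ lam ∧ ∀ z : ι → ℂ, lam * qf M₁ z ≤ qf M₂ z := by
  set W : Set (ℝ × ℝ) := {x | ∃ z : ι → ℂ, x = (qf M₁ z, qf M₂ z)} with hW
  set O : Set (ℝ × ℝ) := {x | 0 < x.1 ∧ x.2 < 0} with hO
  have hOopen : IsOpen O := by
    have he : O = (Prod.fst ⁻¹' Set.Ioi (0:ℝ)) ∩ (Prod.snd ⁻¹' Set.Iio (0:ℝ)) := rfl
    rw [he]
    exact (isOpen_Ioi.preimage continuous_fst).inter (isOpen_Iio.preimage continuous_snd)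
  have hOconv : Convex ℝ O := by
    rintro p ⟨hp1, hp2⟩ q ⟨hq1, hq2⟩ a b ha hb hab
    constructor
    · show 0 < a * p.1 + b * q.1
      rcases eq_or_lt_of_le ha with ha0 | ha0
      · have hb1 : b = 1 := by linarith
        rw [← ha0, hb1]; simpa using hq1
      · nlinarith [mul_nonneg hb hq1.le]
    · show a * p.2 + b * q.2 < 0
      rcases eq_or_lt_of_le ha with ha0 | ha0
      · have hb1 : b = 1 := by linarith
        rw [← ha0, hb1]; simpa using hq2
      · nlinarith [mul_nonneg hb (neg_nonneg.2 hq2.le)]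
  have hdisj : Disjoint O W := by
    rw [Set.disjoint_left]
    rintro p hpO ⟨z, rfl⟩
    exact absurd (himp z hpO.1.le) (not_le.2 hpO.2)
  obtain ⟨f, u, hfO, hfW⟩ :=
    geometric_hahn_banach_open hOconv hOopen (convex_W M₁ M₂ h₁ h₂) hdisj
  set α : ℝ := f (1, 0) with hαdef
  set β : ℝ := f (0, 1) with hβdef
  have hf_eval : ∀ p : ℝ × ℝ, f p = α * p.1 + β * p.2 := by
    intro p
    have hp : p = p.1 • ((1:ℝ), (0:ℝ)) + p.2 • ((0:ℝ), (1:ℝ)) := by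
      apply Prod.ext <;> simp
    conv_lhs => rw [hp]
    rw [map_add, f.map_smul, f.map_smul, smul_eq_mul, smul_eq_mul, ← hαdef, ← hβdef]
    ring
  have h0W : ((0:ℝ), (0:ℝ)) ∈ W := ⟨0, by rw [qf_zero, qf_zero]⟩
  have hu0 : u ≤ 0 := by
    have h := hfW _ h0W
    rw [hf_eval] at h
    simpa using h
  have hWnn : ∀ z : ι → ℂ, 0 ≤ α * qf M₁ z + β * qf M₂ z := by
    intro z
    by_contra hneg
    push_neg at hneg
    set c : ℝ := α * qf M₁ z + β * qf M₂ z with hcdef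
    have hsc : ∀ s : ℝ, 0 ≤ s → u ≤ s * c := by
      intro s hs
      obtain ⟨u', hu'1, hu'2⟩ := mem_scale M₁ M₂ s hs z
      have h := hfW _ ⟨u', rfl⟩
      rw [hf_eval] at h
      simp only at h
      rw [hu'1, hu'2] at h
      have he : α * (s * qf M₁ z) + β * (s * qf M₂ z) = s * c := by rw [hcdef]; ring
      linarith [h, he.le, he.ge]
    have hs : 0 ≤ (u - 1) / c := div_nonneg_of_nonpos (by linarith) hneg.le
    have h := hsc _ hs
    rw [div_mul_cancel₀ _ hneg.ne] at h
    linarith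
  have hαβ : ∀ ε s : ℝ, 0 < ε → 0 < s → α * ε - β * s < u := by
    intro ε s hε hs
    have h := hfO (ε, -s) ⟨hε, neg_lt_zero.2 hs⟩
    rw [hf_eval] at h
    simp only at h
    linarith
  have hβ : 0 ≤ β := by
    by_contra h
    push_neg at h
    have hα1 : α < β := by have := hαβ 1 1 one_pos one_pos; linarith
    have hαneg : α < 0 := lt_trans hα1 h
    have hε : 0 < β / (2 * α) := div_pos_of_neg_of_neg h (by linarith)
    have h2 := hαβ (β / (2 * α)) 1 hε one_pos
    have heq : α * (β / (2 * α)) = β / 2 := by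
      field_simp [hαneg.ne]
    rw [heq] at h2
    linarith
  have hα : α ≤ 0 := by
    by_contra h
    push_neg at h
    have h2 := hαβ ((|β| + 1) / α) 1 (by positivity) one_pos
    have heq : α * ((|β| + 1) / α) = |β| + 1 := by field_simp
    rw [heq] at h2
    have h3 := le_abs_self β
    have h4 := abs_nonneg β
    linarith
  have hβpos : 0 < β := by
    rcases hβ.lt_or_eq with h | h
    · exact h
    · exfalso
      rcases hα.lt_or_eq with hαneg | hα0
      · obtain ⟨zh, hzh⟩ := hpos
        have h5 := hWnn zh
        rw [← h] at h5
        nlinarith [mul_neg_of_neg_of_pos hαneg hzh]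
      · have h6 := hαβ 1 1 one_pos one_pos
        rw [hα0, ← h] at h6
        norm_num at h6
        linarith
  refine ⟨-α / β, div_nonneg (by linarith) hβpos.le, fun z => ?_⟩
  rw [div_mul_eq_mul_div, div_le_iff₀ hβpos]
  nlinarith [hWnn z]

end SLemAux

/-- The Hermitian block matrix `[[A, b], [bᴴ, c]]`. -/
noncomputable def blockMat {n : ℕ} (A : Matrix (Fin n) (Fin n) ℂ) (b : Fin n → ℂ) (c : ℝ) :
    Matrix (Fin n ⊕ Fin 1) (Fin n ⊕ Fin 1) ℂ :=
  Matrix.fromBlocks A (Matrix.of fun i _ => b i) (Matrix.of fun _ j => star (b j))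
    (Matrix.of fun _ _ => (c : ℂ))


open SLemAux in
lemma star_sum_elim {n : ℕ} (x : Fin n → ℂ) (y : Fin 1 → ℂ) :
    (star (Sum.elim x y) : Fin n ⊕ Fin 1 → ℂ) = Sum.elim (star x) (star y) := by
  funext i
  cases i <;> simp

open SLemAux in
lemma blockMat_form {n : ℕ} (A : Matrix (Fin n) (Fin n) ℂ) (b : Fin n → ℂ) (c : ℝ)
    (x : Fin n → ℂ) (t : ℂ) :
    star (Sum.elim x (fun _ : Fin 1 => t)) ⬝ᵥ (blockMat A b c) *ᵥ (Sum.elim x (fun _ => t))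
      = (star x ⬝ᵥ A *ᵥ x) + t * star (star b ⬝ᵥ x) + star t * (star b ⬝ᵥ x)
        + star t * t * (c : ℂ) := by
  rw [blockMat, fromBlocks_mulVec, star_sum_elim, sumElim_dotProduct_sumElim]
  simp only [Sum.elim_comp_inl, Sum.elim_comp_inr]
  rw [dotProduct_add, dotProduct_add]
  have h1 : (star x ⬝ᵥ (Matrix.of fun i (_ : Fin 1) => b i) *ᵥ (fun _ => t))
      = t * star (star b ⬝ᵥ x) := by
    rw [← star_dotProduct]
    simp [mulVec, dotProduct, Finset.mul_sum]
    ring_nf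
    congr 1
    funext i
    ring
  have h2 : ((star fun _ : Fin 1 => t) ⬝ᵥ (Matrix.of fun (_ : Fin 1) j => star (b j)) *ᵥ x)
      = star t * (star b ⬝ᵥ x) := by
    simp [mulVec, dotProduct, Finset.mul_sum]
  have h3 : ((star fun _ : Fin 1 => t) ⬝ᵥ (Matrix.of fun (_ : Fin 1) (_ : Fin 1) => (c:ℂ)) *ᵥ (fun _ => t))
      = star t * t * (c : ℂ) := by
    simp [mulVec, dotProduct]
    ring
  rw [h1, h2, h3]
  ring

open SLemAux in
lemma blockMat_qf {n : ℕ} (A : Matrix (Fin n) (Fin n) ℂ) (b : Fin n → ℂ) (c : ℝ)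
    (x : Fin n → ℂ) (t : ℂ) :
    qf (blockMat A b c) (Sum.elim x (fun _ : Fin 1 => t))
      = (star x ⬝ᵥ A *ᵥ x).re + 2 * (star t * (star b ⬝ᵥ x)).re + Complex.normSq t * c := by
  unfold SLemAux.qf
  rw [blockMat_form]
  simp only [Complex.add_re]
  have e1 : (t * star (star b ⬝ᵥ x)).re = (star t * (star b ⬝ᵥ x)).re := by
    have : t * star (star b ⬝ᵥ x) = star (star t * (star b ⬝ᵥ x)) := by
      rw [StarMul.star_mul, star_star]
      exact (mul_comm _ _)
    rw [this, Complex.star_def, Complex.conj_re]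
  have e2 : (star t * t * (c : ℂ)).re = Complex.normSq t * c := by
    have h : star t * t = (Complex.normSq t : ℂ) := by
      rw [Complex.star_def, mul_comm, Complex.mul_conj]
    rw [h, ← Complex.ofReal_mul, Complex.ofReal_re]
  rw [e1, e2]
  ring

open SLemAux in
lemma blockMat_qf_one {n : ℕ} (A : Matrix (Fin n) (Fin n) ℂ) (b : Fin n → ℂ) (c : ℝ)
    (x : Fin n → ℂ) :
    qf (blockMat A b c) (Sum.elim x (fun _ : Fin 1 => (1:ℂ)))
      = (star x ⬝ᵥ A *ᵥ x).re + 2 * (star b ⬝ᵥ x).re + c := by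
  rw [blockMat_qf]
  simp

lemma blockMat_herm {n : ℕ} {A : Matrix (Fin n) (Fin n) ℂ} (hA : A.IsHermitian)
    (b : Fin n → ℂ) (c : ℝ) : (blockMat A b c).IsHermitian := by
  show _ = _
  ext i j
  rw [Matrix.conjTranspose_apply]
  rcases i with i | i <;> rcases j with j | j
  · show star (A j i) = A i j
    rw [← Matrix.conjTranspose_apply, hA.eq]
  · show star (star (b i)) = b i
    simp
  · rfl
  · show star ((c : ℂ)) = (c : ℂ)
    simp [Complex.star_def, Complex.conj_ofReal]

lemma sum_elim_decomp {n : ℕ} (z : Fin n ⊕ Fin 1 → ℂ) :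
    z = Sum.elim (fun i => z (Sum.inl i)) (fun _ => z (Sum.inr 0)) := by
  funext i
  rcases i with i | j
  · rfl
  · have : j = 0 := Subsingleton.elim _ _
    rw [this]
    rfl

lemma smul_sum_elim {n : ℕ} (t : ℂ) (x : Fin n → ℂ) :
    t • Sum.elim x (fun _ : Fin 1 => (1:ℂ)) = Sum.elim (t • x) (fun _ => t) := by
  funext i
  rcases i with i | j <;> simp

lemma sum_elim_add {n : ℕ} (x v : Fin n → ℂ) :
    Sum.elim (x + v) (fun _ : Fin 1 => (1:ℂ))
      = Sum.elim x (fun _ => (1:ℂ)) + Sum.elim v (fun _ => (0:ℂ)) := by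
  funext i
  rcases i with i | j <;> simp

lemma smul_sum_elim_zero {n : ℕ} (a : ℂ) (x : Fin n → ℂ) :
    a • Sum.elim x (fun _ : Fin 1 => (0:ℂ)) = Sum.elim (a • x) (fun _ => (0:ℂ)) := by
  funext i
  rcases i with i | j <;> simp

open SLemAux in
/-- Complex S-lemma. -/
theorem complex_S_lemma {n : ℕ} (A₁ A₂ : Matrix (Fin n) (Fin n) ℂ)
    (hA₁ : A₁.IsHermitian) (hA₂ : A₂.IsHermitian)
    (b₁ b₂ : Fin n → ℂ) (c₁ c₂ : ℝ)
    (f₁ f₂ : (Fin n → ℂ) → ℝ)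
    (hf₁ : ∀ x, f₁ x = (star x ⬝ᵥ A₁ *ᵥ x).re + 2 * (star b₁ ⬝ᵥ x).re + c₁)
    (hf₂ : ∀ x, f₂ x = (star x ⬝ᵥ A₂ *ᵥ x).re + 2 * (star b₂ ⬝ᵥ x).re + c₂)
    (hSlater : ∃ xhat : Fin n → ℂ, 0 < f₁ xhat) :
    (∀ x : Fin n → ℂ, 0 ≤ f₁ x → 0 ≤ f₂ x) ↔
      ∃ lam : ℝ, 0 ≤ lam ∧
        (blockMat A₂ b₂ c₂ - (lam : ℂ) • blockMat A₁ b₁ c₁).PosSemidef := by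
  set M₁ := blockMat A₁ b₁ c₁ with hM₁
  set M₂ := blockMat A₂ b₂ c₂ with hM₂
  have hM₁h : M₁.IsHermitian := blockMat_herm hA₁ b₁ c₁
  have hM₂h : M₂.IsHermitian := blockMat_herm hA₂ b₂ c₂
  have hq₁ : ∀ x, qf M₁ (Sum.elim x (fun _ : Fin 1 => (1:ℂ))) = f₁ x := by
    intro x; rw [hM₁, blockMat_qf_one, hf₁]
  have hq₂ : ∀ x, qf M₂ (Sum.elim x (fun _ : Fin 1 => (1:ℂ))) = f₂ x := by
    intro x; rw [hM₂, blockMat_qf_one, hf₂]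
  constructor
  · intro himp
    have himp' : ∀ z : Fin n ⊕ Fin 1 → ℂ, 0 ≤ qf M₁ z → 0 ≤ qf M₂ z := by
      intro z hz
      obtain ⟨x, t, rfl⟩ : ∃ x t, z = Sum.elim x (fun _ : Fin 1 => t) :=
        ⟨_, _, sum_elim_decomp z⟩
      by_cases ht : t = 0
      · subst ht
        obtain ⟨xhat, hxhat⟩ := hSlater
        set zh : Fin n ⊕ Fin 1 → ℂ := Sum.elim xhat (fun _ => (1:ℂ)) with hzh
        set z0 : Fin n ⊕ Fin 1 → ℂ := Sum.elim x (fun _ => (0:ℂ)) with hz0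
        by_contra hneg
        push_neg at hneg
        set Q : ℝ := qf M₂ z0 with hQ
        have hQneg : Q < 0 := hneg
        obtain ⟨μ, hμ1, hμ2⟩ := unit_phase_nonneg (star zh ⬝ᵥ M₁ *ᵥ z0)
        set ρ : ℝ := ((μ : ℂ) * (star zh ⬝ᵥ M₂ *ᵥ z0)).re with hρ
        have hexp : ∀ (M : Matrix (Fin n ⊕ Fin 1) (Fin n ⊕ Fin 1) ℂ), M.IsHermitian →
            ∀ r : ℝ, qf M (Sum.elim (xhat + ((r:ℂ) * μ) • x) (fun _ => (1:ℂ)))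
              = qf M zh + r^2 * qf M z0 + 2 * r * ((μ * (star zh ⬝ᵥ M *ᵥ z0)).re) := by
          intro M hM r
          rw [sum_elim_add, ← smul_sum_elim_zero, ← hz0, ← hzh, qf_add M hM,
            form_smul_right]
          have h1 : qf M (((r:ℂ) * μ) • z0) = r^2 * qf M z0 := by
            rw [qf_smul, Complex.normSq_mul, Complex.normSq_ofReal, hμ1]
            ring
          have h2 : (((r:ℂ) * μ) * (star zh ⬝ᵥ M *ᵥ z0)).re
              = r * ((μ * (star zh ⬝ᵥ M *ᵥ z0)).re) := by
            rw [mul_assoc, Complex.re_ofReal_mul]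
          rw [h1, h2]
          ring
        set r : ℝ := max 1 ((|f₂ xhat| + 2 * |ρ| + 1) / (-Q)) with hr
        have hr1 : 1 ≤ r := le_max_left _ _
        have hr0 : 0 ≤ r := by linarith
        have hQ' : 0 < -Q := by linarith
        have hrQ : |f₂ xhat| + 2 * |ρ| + 1 ≤ r * (-Q) := by
          have h := le_max_right 1 ((|f₂ xhat| + 2 * |ρ| + 1) / (-Q))
          calc |f₂ xhat| + 2 * |ρ| + 1
              = ((|f₂ xhat| + 2 * |ρ| + 1) / (-Q)) * (-Q) :=
                (div_mul_cancel₀ _ hQ'.ne').symm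
            _ ≤ r * (-Q) := mul_le_mul_of_nonneg_right h hQ'.le
        have hf1r : 0 ≤ f₁ (xhat + ((r:ℂ) * μ) • x) := by
          rw [← hq₁, hexp M₁ hM₁h r, hq₁ xhat]
          have k1 : 0 ≤ r ^ 2 * qf M₁ z0 := mul_nonneg (sq_nonneg r) hz
          have k2 : 0 ≤ 2 * r * ((μ * (star zh ⬝ᵥ M₁ *ᵥ z0)).re) :=
            mul_nonneg (mul_nonneg (by norm_num) hr0) hμ2
          linarith
        have hf2r := himp _ hf1r
        rw [← hq₂, hexp M₂ hM₂h r, hq₂ xhat, ← hρ] at hf2r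
        nlinarith [mul_le_mul_of_nonneg_left hrQ hr0,
          mul_le_mul_of_nonneg_left (le_abs_self ρ) hr0,
          mul_nonneg (sub_nonneg.2 hr1) (abs_nonneg (f₂ xhat)),
          le_abs_self (f₂ xhat), abs_nonneg ρ, abs_nonneg (f₂ xhat)]
      · have hzdecomp : Sum.elim x (fun _ : Fin 1 => t)
            = t • Sum.elim (t⁻¹ • x) (fun _ => (1:ℂ)) := by
          rw [smul_sum_elim]
          congr 1
          rw [smul_smul, mul_inv_cancel₀ ht, one_smul]
        rw [hzdecomp, qf_smul] at hz
        rw [hzdecomp, qf_smul]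
        have hns : 0 < Complex.normSq t := Complex.normSq_pos.2 ht
        have h1 : 0 ≤ qf M₁ (Sum.elim (t⁻¹ • x) fun _ => (1:ℂ)) := by
          by_contra hn
          push_neg at hn
          nlinarith
        have h2 : 0 ≤ f₂ (t⁻¹ • x) := himp _ (by rw [← hq₁]; exact h1)
        have h3 : 0 ≤ qf M₂ (Sum.elim (t⁻¹ • x) fun _ => (1:ℂ)) := by
          rw [hq₂]; exact h2
        exact mul_nonneg hns.le h3
    obtain ⟨xh, hxh⟩ := hSlater
    obtain ⟨lam, hlam, hineq⟩ := homog_S M₁ M₂ hM₁h hM₂h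
      ⟨Sum.elim xh (fun _ => (1:ℂ)), by rw [hq₁]; exact hxh⟩ himp'
    refine ⟨lam, hlam, posSemidef_iff_dotProduct_mulVec.mpr ⟨?_, ?_⟩⟩
    · exact herm_sub _ _ hM₂h (herm_real_smul _ lam hM₁h)
    · intro v
      have him := qf_im _ (herm_sub _ _ hM₂h (herm_real_smul _ lam hM₁h)) v
      have hre : 0 ≤ qf (M₂ - (lam:ℂ) • M₁) v := by
        rw [qf_subM, qf_smulM]
        linarith [hineq v]
      exact Complex.nonneg_iff.mpr ⟨hre, him.symm⟩
  · rintro ⟨lam, hlam, hpsd⟩ x hx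
    have h := hpsd.dotProduct_mulVec_nonneg (Sum.elim x (fun _ : Fin 1 => (1:ℂ)))
    have hre : 0 ≤ qf (M₂ - (lam:ℂ) • M₁) (Sum.elim x fun _ => (1:ℂ)) :=
      (Complex.nonneg_iff.mp h).1
    rw [qf_subM, qf_smulM, hq₁, hq₂] at hre
    nlinarith [mul_nonneg hlam hx]
end

section
/- Robust legitimate-SINR constraint as an LMI: Let T be an n×n Hermitian complex matrix, h̄ ∈ ℂⁿ, ε > 0, and η ∈ ℝ. Then the following are equivalent: (i) for every Δ ∈ ℂⁿ with ‖Δ‖² ≤ ε², the real number (h̄ + Δ)ᴴ T (h̄ + Δ) is at least η; (ii) there exists λ ≥ 0 such that the (n+1)×(n+1) block matrix [[λ I + T, T h̄], [(T h̄)ᴴ, h̄ᴴ T h̄ − λ ε² − η]] is positive semidefinite. -/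
open Matrix ComplexOrder

section helperLemmas
variable {n : ℕ}

lemma Ns_eq (v : Fin n → ℂ) : (star v ⬝ᵥ v).re = ∑ i, ‖v i‖ ^ 2 := by
  simp only [dotProduct, Pi.star_apply, Complex.re_sum]
  refine Finset.sum_congr rfl fun i _ => ?_
  rw [Complex.star_def, mul_comm, Complex.mul_conj, ← Complex.sq_norm]
  norm_cast
lemma Ns_nonneg (v : Fin n → ℂ) : 0 ≤ (star v ⬝ᵥ v).re := by rw [Ns_eq]; positivity
lemma Ns_eq_zero {v : Fin n → ℂ} (h : (star v ⬝ᵥ v).re = 0) : v = 0 := by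
  rw [Ns_eq] at h
  funext i
  have hi : ‖v i‖ ^ 2 = 0 :=
    Finset.sum_eq_zero_iff_of_nonneg (fun j _ => by positivity) |>.mp h i (Finset.mem_univ i)
  simpa using pow_eq_zero_iff (n := 2) (by norm_num) |>.mp hi
lemma herm_swap {S : Matrix (Fin n) (Fin n) ℂ} (hS : Sᴴ = S) (v w : Fin n → ℂ) :
    star v ⬝ᵥ S *ᵥ w = star (star w ⬝ᵥ S *ᵥ v) := by
  rw [Matrix.star_dotProduct v (S *ᵥ w), Matrix.star_mulVec, hS, ← Matrix.dotProduct_mulVec]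
lemma herm_swap_re {S : Matrix (Fin n) (Fin n) ℂ} (hS : Sᴴ = S) (v w : Fin n → ℂ) :
    (star v ⬝ᵥ S *ᵥ w).re = (star w ⬝ᵥ S *ᵥ v).re := by rw [herm_swap hS]; simp
lemma expand_re {S : Matrix (Fin n) (Fin n) ℂ} (hS : Sᴴ = S) (u z : Fin n → ℂ) :
    (star (u + z) ⬝ᵥ S *ᵥ (u + z)).re =
      (star u ⬝ᵥ S *ᵥ u).re + 2 * (star z ⬝ᵥ S *ᵥ u).re + (star z ⬝ᵥ S *ᵥ z).re := by
  rw [star_add, Matrix.mulVec_add, add_dotProduct, dotProduct_add,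
    dotProduct_add]
  have := herm_swap_re hS u z
  simp only [Complex.add_re]
  linarith
lemma re_dot_comm (v w : Fin n → ℂ) : (star v ⬝ᵥ w).re = (star w ⬝ᵥ v).re := by
  rw [Matrix.star_dotProduct]; simp
lemma star_csmul_dot (a : ℂ) (v x : Fin n → ℂ) :
    star (a • v) ⬝ᵥ x = star a * (star v ⬝ᵥ x) := by
  rw [star_smul, smul_dotProduct, smul_eq_mul]
lemma star_smul_dot (s : ℝ) (v x : Fin n → ℂ) :
    star ((s : ℂ) • v) ⬝ᵥ x = (s : ℂ) * (star v ⬝ᵥ x) := by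
  rw [star_csmul_dot]
  norm_num [Complex.star_def, Complex.conj_ofReal]
lemma re_dot_add_smul (w v x : Fin n → ℂ) (s : ℝ) :
    (star (w + (s : ℂ) • v) ⬝ᵥ x).re = (star w ⬝ᵥ x).re + s * (star v ⬝ᵥ x).re := by
  rw [star_add, add_dotProduct, star_smul_dot]
  simp [Complex.re_ofReal_mul]
lemma dot_smul_re (s : ℝ) (v x : Fin n → ℂ) :
    (star x ⬝ᵥ ((s : ℂ) • v)).re = s * (star x ⬝ᵥ v).re := by
  rw [dotProduct_smul, smul_eq_mul, Complex.re_ofReal_mul]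
lemma wiggle {A B C : ℝ} (h : ∀ s : ℝ, 0 < s → s ≤ 1 → 0 ≤ A + s * B + s ^ 2 * C) : 0 ≤ A := by
  by_contra hA
  push_neg at hA
  set s := min 1 (-A / (2 * (|B| + |C| + 1))) with hs
  have hs0 : 0 < s := lt_min one_pos (by apply div_pos <;> [linarith; positivity])
  have hs1 : s ≤ 1 := min_le_left _ _
  have h2 : s ≤ -A / (2 * (|B| + |C| + 1)) := min_le_right _ _
  have h3 : s * (2 * (|B| + |C| + 1)) ≤ -A := by
    rw [le_div_iff₀ (by positivity)] at h2
    linarith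
  have h4 := h s hs0 hs1
  nlinarith [le_abs_self B, neg_abs_le B, le_abs_self C, neg_abs_le C, abs_nonneg B, abs_nonneg C,
    sq_nonneg s, mul_le_mul_of_nonneg_left hs1 hs0.le]
lemma wiggle_lin {A B : ℝ} (h : ∀ s : ℝ, 0 < s → s ≤ 1 → 0 ≤ A + s * B) : 0 ≤ A :=
  wiggle (C := 0) (fun s hs hs1 => by simpa using h s hs hs1)
lemma quad_pos {C D δ : ℝ} (hδ : 0 < δ) (h : ∀ t, 0 < t → t ≤ δ → 0 ≤ 2 * (t * D) + t ^ 2 * C) :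
    0 ≤ D := by
  have key : ∀ s : ℝ, 0 < s → s ≤ 1 → 0 ≤ 2 * δ * D + s * (δ ^ 2 * C) := by
    intro s hs hs1
    have h1 := h (δ * s) (by positivity) (by nlinarith)
    have h2 : 0 ≤ s * (2 * δ * D + s * (δ ^ 2 * C)) := by nlinarith
    exact nonneg_of_mul_nonneg_right h2 hs
  have := wiggle_lin key
  nlinarith
lemma smul_quad_re (S : Matrix (Fin n) (Fin n) ℂ) (w : Fin n → ℂ) (t : ℝ) :
    (star ((t : ℂ) • w) ⬝ᵥ S *ᵥ ((t : ℂ) • w)).re = t ^ 2 * (star w ⬝ᵥ S *ᵥ w).re := by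
  rw [Matrix.mulVec_smul, star_smul_dot, dotProduct_smul, smul_eq_mul, ← mul_assoc]
  have h : ((t : ℂ) * (t : ℂ)) = ((t * t : ℝ) : ℂ) := by push_cast; ring
  rw [h, Complex.re_ofReal_mul]
  ring
lemma smul_Ns_re (w : Fin n → ℂ) (t : ℝ) :
    (star ((t : ℂ) • w) ⬝ᵥ ((t : ℂ) • w)).re = t ^ 2 * (star w ⬝ᵥ w).re := by
  have := smul_quad_re (1 : Matrix (Fin n) (Fin n) ℂ) w t
  simpa [Matrix.one_mulVec] using this

lemma herm_im {S : Matrix (Fin n) (Fin n) ℂ} (hS : Sᴴ = S) (v : Fin n → ℂ) :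
    (star v ⬝ᵥ S *ᵥ v).im = 0 := by
  have h1 := herm_swap hS v v
  have h2 : (star v ⬝ᵥ S *ᵥ v).im = -(star v ⬝ᵥ S *ᵥ v).im := by
    conv_lhs => rw [h1]
    simp
  linarith

lemma S_herm {T : Matrix (Fin n) (Fin n) ℂ} (hT : T.IsHermitian) (lam : ℝ) :
    ((lam : ℂ) • (1 : Matrix (Fin n) (Fin n) ℂ) + T)ᴴ
      = (lam : ℂ) • (1 : Matrix (Fin n) (Fin n) ℂ) + T := by
  rw [Matrix.conjTranspose_add, Matrix.conjTranspose_smul, Matrix.conjTranspose_one, hT.eq]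
  simp [Complex.star_def, Complex.conj_ofReal]

lemma S_form (lam : ℝ) (T : Matrix (Fin n) (Fin n) ℂ) (v : Fin n → ℂ) :
    star v ⬝ᵥ ((lam : ℂ) • (1 : Matrix (Fin n) (Fin n) ℂ) + T) *ᵥ v
      = (lam : ℂ) * (star v ⬝ᵥ v) + star v ⬝ᵥ T *ᵥ v := by
  rw [Matrix.add_mulVec, dotProduct_add, Matrix.smul_mulVec, Matrix.one_mulVec,
    dotProduct_smul, smul_eq_mul]

end helperLemmas

section mainLemmas
variable {n : ℕ}

lemma blockMat_isHermitian {A : Matrix (Fin n) (Fin n) ℂ} (hA : Aᴴ = A) (b : Fin n → ℂ)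
    (c : ℝ) : (blockMat A b c).IsHermitian := by
  refine Matrix.ext fun i j => ?_
  rcases i with i | i <;> rcases j with j | j <;>
    simp [blockMat, Matrix.conjTranspose_apply, Matrix.fromBlocks, Complex.star_def,
      Complex.conj_ofReal]
  exact congrFun (congrFun hA i) j

lemma blockMat_quadForm (A : Matrix (Fin n) (Fin n) ℂ) (b : Fin n → ℂ) (c : ℝ)
    (y : Fin n → ℂ) (t : ℂ) :
    star (Sum.elim y (fun _ : Fin 1 => t)) ⬝ᵥ (blockMat A b c) *ᵥ (Sum.elim y (fun _ => t)) =
      star y ⬝ᵥ A *ᵥ y + (star y ⬝ᵥ b) * t + star t * (star b ⬝ᵥ y)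
        + star t * t * (c : ℂ) := by
  have hstar : star (Sum.elim y (fun _ : Fin 1 => t)) =
      Sum.elim (star y) (fun _ : Fin 1 => star t) := by
    funext i; cases i <;> simp
  rw [hstar]
  unfold blockMat
  rw [Matrix.fromBlocks_mulVec]
  have h1 : (Sum.elim y (fun _ : Fin 1 => t)) ∘ Sum.inl = y := rfl
  have h2 : (Sum.elim y (fun _ : Fin 1 => t)) ∘ Sum.inr = fun _ => t := rfl
  rw [h1, h2, sumElim_dotProduct_sumElim]
  have hB : (Matrix.of fun i (_ : Fin 1) => b i) *ᵥ (fun _ => t) = fun i => b i * t := by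
    funext i; simp [Matrix.mulVec, dotProduct]
  have hC : (Matrix.of fun (_ : Fin 1) j => star (b j)) *ᵥ y = fun _ => star b ⬝ᵥ y := by
    funext i; simp [Matrix.mulVec, dotProduct]
  have hD : (Matrix.of fun (_ : Fin 1) (_ : Fin 1) => (c : ℂ)) *ᵥ (fun _ => t) =
      fun _ => (c : ℂ) * t := by
    funext i; simp [Matrix.mulVec, dotProduct]
  rw [hB, hC, hD]
  simp only [dotProduct_add, dotProduct, Fin.sum_univ_one, Sum.elim_inr,
    Pi.add_apply]
  simp only [mul_add, Finset.sum_add_distrib, ← mul_assoc, ← Finset.sum_mul]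
  ring

lemma build_psd {T : Matrix (Fin n) (Fin n) ℂ} (hT : T.IsHermitian)
    {hbar Δ₀ : Fin n → ℂ} {ε η lam : ℝ} (hlam : 0 ≤ lam)
    (hg : T *ᵥ hbar + T *ᵥ Δ₀ = -((lam : ℂ) • Δ₀))
    (hS : ∀ v, 0 ≤ (star v ⬝ᵥ T *ᵥ v).re + lam * (star v ⬝ᵥ v).re)
    (hcomp : lam * (ε ^ 2 - (star Δ₀ ⬝ᵥ Δ₀).re) = 0)
    (hη : η ≤ (star (hbar + Δ₀) ⬝ᵥ T *ᵥ (hbar + Δ₀)).re) :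
    (blockMat ((lam : ℂ) • (1 : Matrix (Fin n) (Fin n) ℂ) + T) (T *ᵥ hbar)
      ((star hbar ⬝ᵥ T *ᵥ hbar).re - lam * ε ^ 2 - η)).PosSemidef := by
  set c : ℝ := (star hbar ⬝ᵥ T *ᵥ hbar).re - lam * ε ^ 2 - η with hcdef
  set S : Matrix (Fin n) (Fin n) ℂ := (lam : ℂ) • 1 + T with hSdef
  have hSH : Sᴴ = S := S_herm hT lam
  have hSpsd : ∀ v, 0 ≤ (star v ⬝ᵥ S *ᵥ v).re := by
    intro v
    rw [hSdef, S_form]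
    simp only [Complex.add_re, Complex.re_ofReal_mul]
    linarith [hS v]
  have hSΔ : S *ᵥ Δ₀ = (lam : ℂ) • Δ₀ + T *ᵥ Δ₀ := by
    rw [hSdef, Matrix.add_mulVec, Matrix.smul_mulVec, Matrix.one_mulVec]
  have hb : T *ᵥ hbar = -(S *ᵥ Δ₀) := by
    rw [hSΔ, neg_add, eq_sub_of_add_eq hg]
    abel
  set c₀ : ℝ := (star Δ₀ ⬝ᵥ S *ᵥ Δ₀).re with hc₀def
  have e1 := expand_re hT.eq hbar Δ₀
  have e2 : (star Δ₀ ⬝ᵥ T *ᵥ hbar).re = -c₀ := by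
    rw [hb, dotProduct_neg, Complex.neg_re, hc₀def]
  have e3 : c₀ = lam * (star Δ₀ ⬝ᵥ Δ₀).re + (star Δ₀ ⬝ᵥ T *ᵥ Δ₀).re := by
    rw [hc₀def, hSdef, S_form]
    simp [Complex.add_re, Complex.re_ofReal_mul]
  have hc : c₀ ≤ c := by
    rw [e1, e2] at hη
    rw [hcdef]
    nlinarith [hcomp, e3]
  refine Matrix.PosSemidef.of_dotProduct_mulVec_nonneg (blockMat_isHermitian hSH _ _) fun x => ?_
  have hx : x = Sum.elim (x ∘ Sum.inl) (fun _ : Fin 1 => x (Sum.inr 0)) := by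
    funext i
    rcases i with i | i
    · rfl
    · have h0 : i = 0 := Subsingleton.elim _ _
      rw [h0]
      simp
  set y : Fin n → ℂ := x ∘ Sum.inl with hy
  set t : ℂ := x (Sum.inr 0) with ht
  rw [hx, blockMat_quadForm]
  set z₁ : ℂ := star y ⬝ᵥ S *ᵥ Δ₀ with hz₁
  have hyb : star y ⬝ᵥ (T *ᵥ hbar) = -z₁ := by rw [hb, dotProduct_neg, hz₁]
  have hby : star (T *ᵥ hbar) ⬝ᵥ y = star (-z₁) := by
    rw [Matrix.star_dotProduct, hyb]
  have hcross : star ((-t) • Δ₀) ⬝ᵥ S *ᵥ y = star (-(z₁ * t)) := by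
    rw [star_csmul_dot, herm_swap hSH Δ₀ y, ← hz₁]
    simp [StarMul.star_mul, mul_neg, neg_mul, mul_comm]
  have hmulconj : star t * t = ((Complex.normSq t : ℝ) : ℂ) := by
    rw [Complex.star_def, mul_comm, Complex.mul_conj]
  have hdiag : star ((-t) • Δ₀) ⬝ᵥ S *ᵥ ((-t) • Δ₀)
      = ((Complex.normSq t : ℝ) : ℂ) * (star Δ₀ ⬝ᵥ S *ᵥ Δ₀) := by
    rw [star_csmul_dot, Matrix.mulVec_smul, dotProduct_smul, smul_eq_mul, star_neg,
      ← hmulconj]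
    ring
  have hexp := expand_re hSH y ((-t) • Δ₀)
  rw [hcross, hdiag] at hexp
  have hkey := hSpsd (y + (-t) • Δ₀)
  rw [hexp] at hkey
  have hre1 : (star (-(z₁ * t))).re = -(z₁ * t).re := by simp
  have hre2 : (((Complex.normSq t : ℝ) : ℂ) * (star Δ₀ ⬝ᵥ S *ᵥ Δ₀)).re
      = Complex.normSq t * c₀ := by
    rw [Complex.re_ofReal_mul, hc₀def]
  rw [hre1, hre2] at hkey
  have hcc : ((Complex.normSq t : ℝ) : ℂ) * (c : ℂ) = ((Complex.normSq t * c : ℝ) : ℂ) := by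
    push_cast; ring
  have hsm : star t * star (-z₁) = star (-(z₁ * t)) := by
    simp [StarMul.star_mul, mul_neg, neg_mul, mul_comm]
  rw [hyb, hby, hmulconj, hcc, hsm, neg_mul]
  rw [Complex.le_def]
  constructor
  · simp only [Complex.zero_re, Complex.add_re, Complex.neg_re, Complex.ofReal_re,
      Complex.star_def, Complex.conj_re]
    have hmul := mul_le_mul_of_nonneg_left hc (Complex.normSq_nonneg t)
    linarith [hkey]
  · simp only [Complex.zero_im, Complex.add_im, Complex.ofReal_im, Complex.star_def,
      Complex.conj_im]
    have h1 : (star y ⬝ᵥ S *ᵥ y).im = 0 := herm_im hSH y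
    linarith

set_option maxHeartbeats 2000000 in
lemma exists_kkt (T : Matrix (Fin n) (Fin n) ℂ) (hT : T.IsHermitian) (hbar : Fin n → ℂ)
    {ε : ℝ} (hε : 0 < ε) :
    ∃ lam : ℝ, 0 ≤ lam ∧ ∃ Δ₀ : Fin n → ℂ, (star Δ₀ ⬝ᵥ Δ₀).re ≤ ε ^ 2 ∧
      T *ᵥ hbar + T *ᵥ Δ₀ = -((lam : ℂ) • Δ₀) ∧
      (∀ v, 0 ≤ (star v ⬝ᵥ T *ᵥ v).re + lam * (star v ⬝ᵥ v).re) ∧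
      lam * (ε ^ 2 - (star Δ₀ ⬝ᵥ Δ₀).re) = 0 := by
  classical
  set Q : (Fin n → ℂ) → ℝ := fun Δ => (star (hbar + Δ) ⬝ᵥ T *ᵥ (hbar + Δ)).re with hQdef
  set Ns : (Fin n → ℂ) → ℝ := fun v => (star v ⬝ᵥ v).re with hNsdef
  set K : Set (Fin n → ℂ) := {Δ | Ns Δ ≤ ε ^ 2} with hKdef
  have hNscont : Continuous Ns := by
    have h1 : Ns = fun v : Fin n → ℂ => ∑ i, ‖v i‖ ^ 2 := funext fun v => Ns_eq v
    rw [h1]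
    exact continuous_finset_sum _ fun i _ => (continuous_apply i).norm.pow 2
  have hQcont : Continuous Q := by
    have h1 : Q = fun Δ : Fin n → ℂ =>
        (∑ i, star (hbar i + Δ i) * ∑ j, T i j * (hbar j + Δ j)).re := by
      funext Δ
      simp [hQdef, dotProduct, Matrix.mulVec]
    rw [h1]
    refine Complex.continuous_re.comp (continuous_finset_sum _ fun i _ => Continuous.mul ?_ ?_)
    · exact (continuous_const.add (continuous_apply i)).star
    · exact continuous_finset_sum _ fun j _ =>
        continuous_const.mul (continuous_const.add (continuous_apply j))
  have hKclosed : IsClosed K := isClosed_le hNscont continuous_const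
  have hKbdd : Bornology.IsBounded K := by
    apply (Metric.isBounded_closedBall (x := (0 : Fin n → ℂ)) (r := ε)).subset
    intro Δ hΔ
    rw [Metric.mem_closedBall, dist_zero_right, pi_norm_le_iff_of_nonneg hε.le]
    intro i
    have h2 : Ns Δ ≤ ε ^ 2 := hΔ
    rw [hNsdef] at h2
    simp only at h2
    rw [Ns_eq] at h2
    have h1 : ‖Δ i‖ ^ 2 ≤ ε ^ 2 :=
      le_trans (Finset.single_le_sum (f := fun j => ‖Δ j‖ ^ 2) (fun j _ => by positivity)
        (Finset.mem_univ i)) h2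
    nlinarith [norm_nonneg (Δ i)]
  have hK0 : (0 : Fin n → ℂ) ∈ K := by
    show Ns 0 ≤ ε ^ 2
    rw [hNsdef]
    simp only
    rw [Ns_eq]
    simp
    positivity
  obtain ⟨Δ₀, hΔ₀K, hminOn⟩ :=
    (Metric.isCompact_of_isClosed_isBounded hKclosed hKbdd).exists_isMinOn ⟨0, hK0⟩
      hQcont.continuousOn
  have hmin : ∀ Δ ∈ K, Q Δ₀ ≤ Q Δ := fun Δ hΔ => hminOn hΔ
  have hΔ₀ : Ns Δ₀ ≤ ε ^ 2 := hΔ₀K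
  set g : Fin n → ℂ := T *ᵥ (hbar + Δ₀) with hgdef
  -- quadratic expansions
  have hquad : ∀ (w : Fin n → ℂ) (t : ℝ), Q (Δ₀ + (t : ℂ) • w) =
      Q Δ₀ + 2 * (t * (star w ⬝ᵥ g).re) + t ^ 2 * (star w ⬝ᵥ T *ᵥ w).re := by
    intro w t
    have h1 : hbar + (Δ₀ + (t : ℂ) • w) = (hbar + Δ₀) + (t : ℂ) • w := by rw [add_assoc]
    rw [hQdef]
    simp only
    rw [h1, expand_re hT.eq (hbar + Δ₀) ((t : ℂ) • w), star_smul_dot, ← hgdef,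
      Complex.re_ofReal_mul, smul_quad_re]
  have hNquad : ∀ (w : Fin n → ℂ) (t : ℝ), Ns (Δ₀ + (t : ℂ) • w) =
      Ns Δ₀ + 2 * (t * (star Δ₀ ⬝ᵥ w).re) + t ^ 2 * Ns w := by
    intro w t
    have h0 := expand_re (S := (1 : Matrix (Fin n) (Fin n) ℂ)) Matrix.conjTranspose_one Δ₀
      ((t : ℂ) • w)
    simp only [Matrix.one_mulVec] at h0
    rw [hNsdef]
    simp only
    rw [h0, star_smul_dot, Complex.re_ofReal_mul, re_dot_comm w Δ₀, smul_Ns_re]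
  have hstep : ∀ (w : Fin n → ℂ) (δ : ℝ), 0 < δ →
      (∀ t : ℝ, 0 < t → t ≤ δ → Ns (Δ₀ + (t : ℂ) • w) ≤ ε ^ 2) → 0 ≤ (star w ⬝ᵥ g).re := by
    intro w δ hδ hmem
    refine quad_pos (C := (star w ⬝ᵥ T *ᵥ w).re) hδ fun t ht htδ => ?_
    have h1 := hmin _ (hmem t ht htδ)
    rw [hquad w t] at h1
    linarith
  rcases eq_or_lt_of_le hΔ₀ with heq | hlt
  · -- boundary case : Ns Δ₀ = ε ^ 2
    have hε2 : (0 : ℝ) < ε ^ 2 := by positivity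
    have h0 : (star Δ₀ ⬝ᵥ Δ₀).re = ε ^ 2 := heq
    have stepA : ∀ w : Fin n → ℂ, (star Δ₀ ⬝ᵥ w).re < 0 → 0 ≤ (star w ⬝ᵥ g).re := by
      intro w hip
      have hNw : 0 ≤ Ns w := Ns_nonneg w
      refine hstep w (-2 * (star Δ₀ ⬝ᵥ w).re / (Ns w + 1))
        (by apply div_pos <;> linarith) ?_
      intro t ht htδ
      rw [hNquad, heq]
      have h3 : t * (Ns w + 1) ≤ -2 * (star Δ₀ ⬝ᵥ w).re := by
        rw [le_div_iff₀ (by linarith)] at htδ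
        linarith
      nlinarith [mul_le_mul_of_nonneg_left h3 ht.le, sq_nonneg t]
    have stepA' : ∀ w : Fin n → ℂ, (star Δ₀ ⬝ᵥ w).re ≤ 0 → 0 ≤ (star w ⬝ᵥ g).re := by
      intro w hip
      refine wiggle_lin (B := -(star Δ₀ ⬝ᵥ g).re) fun s hs hs1 => ?_
      have h1 : (star Δ₀ ⬝ᵥ (w + ((-s : ℝ) : ℂ) • Δ₀)).re < 0 := by
        rw [dotProduct_add, Complex.add_re, dot_smul_re, h0]
        nlinarith
      have h2 := stepA _ h1
      rw [re_dot_add_smul] at h2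
      linarith
    have hlam0 : 0 ≤ -(star Δ₀ ⬝ᵥ g).re := by
      have h1 : (star Δ₀ ⬝ᵥ (-Δ₀)).re < 0 := by
        rw [dotProduct_neg, Complex.neg_re, h0]
        linarith
      have h2 := stepA _ h1
      rw [star_neg, neg_dotProduct, Complex.neg_re] at h2
      linarith
    set lam : ℝ := -(star Δ₀ ⬝ᵥ g).re / ε ^ 2 with hlamdef
    have hlam : 0 ≤ lam := div_nonneg hlam0 hε2.le
    have hΔg : (star Δ₀ ⬝ᵥ g).re = -(lam * ε ^ 2) := by
      rw [hlamdef]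
      field_simp
    set w0 : Fin n → ℂ := g + (lam : ℂ) • Δ₀ with hw0def
    have hipw0 : (star Δ₀ ⬝ᵥ w0).re = 0 := by
      rw [hw0def, dotProduct_add, Complex.add_re, dot_smul_re, hΔg, h0]
      ring
    have hDw0 : (star w0 ⬝ᵥ g).re = 0 := by
      have h1 := stepA' w0 (le_of_eq hipw0)
      have h2 := stepA' (-w0) (by rw [dotProduct_neg, Complex.neg_re, hipw0]; simp)
      rw [star_neg, neg_dotProduct, Complex.neg_re] at h2
      linarith
    have hw00 : w0 = 0 := by
      apply Ns_eq_zero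
      have h1 : star w0 ⬝ᵥ w0 = star w0 ⬝ᵥ (g + (lam : ℂ) • Δ₀) :=
        congrArg (fun z => star w0 ⬝ᵥ z) hw0def
      rw [h1, dotProduct_add, Complex.add_re, dot_smul_re, hDw0,
        re_dot_comm w0 Δ₀, hipw0]
      ring
    have hgeq : g = -((lam : ℂ) • Δ₀) := by
      rw [hw0def] at hw00
      exact eq_neg_of_add_eq_zero_left hw00
    have hS1 : ∀ v : Fin n → ℂ, (star Δ₀ ⬝ᵥ v).re ≠ 0 →
        0 ≤ (star v ⬝ᵥ T *ᵥ v).re + lam * (star v ⬝ᵥ v).re := by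
      intro v hipv
      have hNv : 0 < Ns v := by
        rcases lt_or_eq_of_le (Ns_nonneg v) with h | h
        · exact h
        · exfalso
          apply hipv
          rw [Ns_eq_zero h.symm]
          simp
      set t : ℝ := -2 * (star Δ₀ ⬝ᵥ v).re / Ns v with htdef
      have htNs : t * Ns v = -2 * (star Δ₀ ⬝ᵥ v).re := by
        rw [htdef]
        field_simp
      have hid : t ^ 2 * Ns v = -2 * (star Δ₀ ⬝ᵥ v).re * t := by
        rw [sq, mul_assoc, htNs]
        ring
      have ht0 : t ≠ 0 := by
        intro h
        rw [h, zero_mul] at htNs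
        exact hipv (by linarith)
      have hmemt : Ns (Δ₀ + (t : ℂ) • v) ≤ ε ^ 2 := by
        rw [hNquad, heq]
        nlinarith [hid]
      have hm := hmin _ hmemt
      rw [hquad v t] at hm
      have hDv : (star v ⬝ᵥ g).re = -(lam * (star v ⬝ᵥ Δ₀).re) := by
        rw [hgeq, dotProduct_neg, Complex.neg_re, dot_smul_re]
      rw [hDv, re_dot_comm v Δ₀] at hm
      have ht2 : 0 < t ^ 2 := by positivity
      have hid2 : lam * (t ^ 2 * Ns v) = lam * (-2 * (star Δ₀ ⬝ᵥ v).re * t) := by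
        rw [hid]
      have h3 : 0 ≤ t ^ 2 * ((star v ⬝ᵥ T *ᵥ v).re + lam * Ns v) := by
        nlinarith [hm, hid2]
      have h4 := nonneg_of_mul_nonneg_right h3 ht2
      linarith
    have hSpsd : ∀ v : Fin n → ℂ, 0 ≤ (star v ⬝ᵥ T *ᵥ v).re + lam * (star v ⬝ᵥ v).re := by
      intro v
      rcases ne_or_eq ((star Δ₀ ⬝ᵥ v).re) 0 with hipv | hipv
      · exact hS1 v hipv
      · refine wiggle (B := 2 * (star Δ₀ ⬝ᵥ T *ᵥ v).re)
          (C := (star Δ₀ ⬝ᵥ T *ᵥ Δ₀).re + lam * (star Δ₀ ⬝ᵥ Δ₀).re) fun s hs hs1 => ?_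
        have hipvs : (star Δ₀ ⬝ᵥ (v + (s : ℂ) • Δ₀)).re ≠ 0 := by
          rw [dotProduct_add, Complex.add_re, dot_smul_re, hipv, h0, zero_add]
          positivity
        have h1 := hS1 _ hipvs
        have e1 := expand_re hT.eq v ((s : ℂ) • Δ₀)
        rw [smul_quad_re, star_smul_dot, Complex.re_ofReal_mul] at e1
        have e2 := expand_re (S := (1 : Matrix (Fin n) (Fin n) ℂ)) Matrix.conjTranspose_one v
          ((s : ℂ) • Δ₀)
        simp only [Matrix.one_mulVec] at e2
        rw [smul_Ns_re, star_smul_dot, Complex.re_ofReal_mul] at e2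
        rw [hipv] at e2
        rw [e1, e2] at h1
        rw [h0] at e2 h1 ⊢
        nlinarith [h1]
    refine ⟨lam, hlam, Δ₀, hΔ₀, ?_, hSpsd, ?_⟩
    · have hsum : T *ᵥ hbar + T *ᵥ Δ₀ = g := by rw [hgdef, Matrix.mulVec_add]
      rw [hsum, hgeq]
    · rw [h0]
      ring
  · -- interior case
    have hmem2 : ∀ w : Fin n → ℂ, ∀ t : ℝ, 0 < t →
        t ≤ min 1 ((ε ^ 2 - Ns Δ₀) / (2 * |(star Δ₀ ⬝ᵥ w).re| + Ns w + 1)) →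
        Ns (Δ₀ + (t : ℂ) • w) ≤ ε ^ 2 := by
      intro w t ht htδ
      have hNw : 0 ≤ Ns w := Ns_nonneg w
      have ht1 : t ≤ 1 := le_trans htδ (min_le_left _ _)
      have ht2 : t ≤ (ε ^ 2 - Ns Δ₀) / (2 * |(star Δ₀ ⬝ᵥ w).re| + Ns w + 1) :=
        le_trans htδ (min_le_right _ _)
      have ht3 : t * (2 * |(star Δ₀ ⬝ᵥ w).re| + Ns w + 1) ≤ ε ^ 2 - Ns Δ₀ := by
        rw [le_div_iff₀ (by positivity)] at ht2
        linarith
      rw [hNquad]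
      have h4 : t * (star Δ₀ ⬝ᵥ w).re ≤ t * |(star Δ₀ ⬝ᵥ w).re| :=
        mul_le_mul_of_nonneg_left (le_abs_self _) ht.le
      have h5 : t ^ 2 * Ns w ≤ t * Ns w := by nlinarith [mul_nonneg (mul_nonneg ht.le hNw) (sub_nonneg.mpr ht1)]
      linarith
    have hδpos : ∀ w : Fin n → ℂ,
        0 < min 1 ((ε ^ 2 - Ns Δ₀) / (2 * |(star Δ₀ ⬝ᵥ w).re| + Ns w + 1)) := by
      intro w
      have hNw : 0 ≤ Ns w := Ns_nonneg w
      apply lt_min one_pos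
      apply div_pos (by linarith) (by positivity)
    have hD0 : ∀ w : Fin n → ℂ, 0 ≤ (star w ⬝ᵥ g).re :=
      fun w => hstep w _ (hδpos w) (hmem2 w)
    have hg0 : g = 0 := by
      have h1 := hD0 g
      have h2 := hD0 (-g)
      rw [star_neg, neg_dotProduct, Complex.neg_re] at h2
      exact Ns_eq_zero (le_antisymm (by linarith) (Ns_nonneg g))
    have hC0 : ∀ w : Fin n → ℂ, 0 ≤ (star w ⬝ᵥ T *ᵥ w).re := by
      intro w
      have hm := hmin _ (hmem2 w _ (hδpos w) le_rfl)
      rw [hquad] at hm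
      have hD : (star w ⬝ᵥ g).re = 0 := by rw [hg0]; simp
      rw [hD] at hm
      have h6 : 0 < (min 1 ((ε ^ 2 - Ns Δ₀) / (2 * |(star Δ₀ ⬝ᵥ w).re| + Ns w + 1))) *
          (min 1 ((ε ^ 2 - Ns Δ₀) / (2 * |(star Δ₀ ⬝ᵥ w).re| + Ns w + 1))) :=
        mul_pos (hδpos w) (hδpos w)
      nlinarith [hm, h6]
    refine ⟨0, le_rfl, Δ₀, hΔ₀, ?_, ?_, by ring⟩
    · have : T *ᵥ hbar + T *ᵥ Δ₀ = g := by rw [hgdef, Matrix.mulVec_add]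
      rw [this, hg0]
      simp
    · intro v
      simpa using hC0 v

end mainLemmas

/-- Robust legitimate-SINR constraint as an LMI. -/
theorem robust_sinr_lmi {n : ℕ} (T : Matrix (Fin n) (Fin n) ℂ) (hT : T.IsHermitian)
    (hbar : Fin n → ℂ) (ε : ℝ) (hε : 0 < ε) (η : ℝ) :
    (∀ Δ : Fin n → ℂ, (∑ i, ‖Δ i‖ ^ 2) ≤ ε ^ 2 →
        η ≤ (star (hbar + Δ) ⬝ᵥ T *ᵥ (hbar + Δ)).re) ↔
      ∃ lam : ℝ, 0 ≤ lam ∧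
        (blockMat ((lam : ℂ) • (1 : Matrix (Fin n) (Fin n) ℂ) + T) (T *ᵥ hbar)
          ((star hbar ⬝ᵥ T *ᵥ hbar).re - lam * ε ^ 2 - η)).PosSemidef := by
  constructor
  · intro H
    obtain ⟨lam, hlam, Δ₀, hΔ₀, hg, hS, hcomp⟩ := exists_kkt T hT hbar hε
    have hη : η ≤ (star (hbar + Δ₀) ⬝ᵥ T *ᵥ (hbar + Δ₀)).re := by
      apply H
      rw [← Ns_eq]
      exact hΔ₀
    exact ⟨lam, hlam, build_psd hT hlam hg hS hcomp hη⟩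
  · rintro ⟨lam, hlam, hpsd⟩ Δ hΔ
    have hΔ' : (star Δ ⬝ᵥ Δ).re ≤ ε ^ 2 := by rw [Ns_eq]; exact hΔ
    have hq := hpsd.dotProduct_mulVec_nonneg (Sum.elim Δ (fun _ : Fin 1 => (1 : ℂ)))
    rw [blockMat_quadForm] at hq
    rw [Complex.le_def] at hq
    obtain ⟨hre, -⟩ := hq
    rw [S_form] at hre
    simp only [mul_one, one_mul, star_one, Complex.add_re, Complex.re_ofReal_mul,
      Complex.ofReal_re, Complex.zero_re] at hre
    have hcomm : (star (T *ᵥ hbar) ⬝ᵥ Δ).re = (star Δ ⬝ᵥ T *ᵥ hbar).re := re_dot_comm _ _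
    have hexp := expand_re hT.eq hbar Δ
    have hnn : 0 ≤ lam * (ε ^ 2 - (star Δ ⬝ᵥ Δ).re) := mul_nonneg hlam (by linarith)
    rw [hexp]
    nlinarith [hre, hcomm]
end
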